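/- Derivative of the full Lagrangian of the extended rate-distortion problem: fix a matrix q : 𝒳 × 𝒳̂ → ℝ with all entries positive and a coordinate (x₀, x̂₀). Then the real function t ↦ L(q[(x₀,x̂₀) ↦ t]) has derivative at the point t = q(x₀,x̂₀) equal to λ · pX(x₀) · [ log( q(x₀,x̂₀) / pq(x̂₀) ) + λ⁻¹ · d_R(x₀,x̂₀) ] − β · pX(x₀) · Σ_y pYX(y|x₀) · log( pq(x̂₀|y) / pq(x̂₀) ) + r(x₀). -/

import Mathlib

lemma log_div_deriv {f g : ℝ → ℝ} {f' g' t a b : ℝ}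
    (hf : HasDerivAt f f' t) (hg : HasDerivAt g g' t)
    (ha : f t = a) (hb : g t = b) (ha0 : a ≠ 0) (hb0 : b ≠ 0) (c : ℝ) :
    HasDerivAt (fun s => c * f s * Real.log (f s / g s))
      (c * f' * Real.log (a / b) + (c * a) * (f' / a - g' / b)) t := by
  have hg0' : g t ≠ 0 := hb ▸ hb0
  have hl : HasDerivAt (fun s => Real.log (f s / g s)) (f' / a - g' / b) t := by
    have h0 : f t / g t ≠ 0 := by rw [ha, hb]; exact div_ne_zero ha0 hb0
    have hd := (hf.fun_div hg hg0').log h0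
    convert hd using 1
    rw [ha, hb]; field_simp
  have h := (hf.const_mul c).fun_mul hl
  refine h.congr_deriv (Eq.symm ?_)
  rw [ha, hb]

theorem lagrangian_partial_derivative
    {𝒳 𝒳h 𝒴 : Type*} [Fintype 𝒳] [Fintype 𝒳h] [Fintype 𝒴]
    [Nonempty 𝒳] [Nonempty 𝒳h] [Nonempty 𝒴]
    [DecidableEq 𝒳] [DecidableEq 𝒳h]
    (pX : 𝒳 → ℝ) (hpXpos : ∀ x, 0 < pX x) (hpXsum : ∑ x, pX x = 1)
    (pYX : 𝒳 → 𝒴 → ℝ) (hpYXpos : ∀ x y, 0 < pYX x y)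
    (hpYXsum : ∀ x, ∑ y, pYX x y = 1)
    (lam β : ℝ) (hlam : lam ≠ 0)
    (dR : 𝒳 × 𝒳h → ℝ) (r : 𝒳 → ℝ)
    (q : 𝒳 × 𝒳h → ℝ) (hqpos : ∀ x xh, 0 < q (x, xh))
    (x₀ : 𝒳) (xh₀ : 𝒳h) :
    HasDerivAt
      (fun t : ℝ =>
        lam * (∑ x, ∑ xh, pX x * Function.update q (x₀, xh₀) t (x, xh) *
            Real.log (Function.update q (x₀, xh₀) t (x, xh) /
              ∑ x', pX x' * Function.update q (x₀, xh₀) t (x', xh)))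
        + (∑ x, ∑ xh, pX x * Function.update q (x₀, xh₀) t (x, xh) * dR (x, xh))
        - β * (∑ xh, ∑ y, (∑ x, pX x * pYX x y) *
            (∑ x, Function.update q (x₀, xh₀) t (x, xh) *
              (pX x * pYX x y / ∑ x', pX x' * pYX x' y)) *
            Real.log
              ((∑ x, Function.update q (x₀, xh₀) t (x, xh) *
                (pX x * pYX x y / ∑ x', pX x' * pYX x' y)) /
               ∑ x, pX x * Function.update q (x₀, xh₀) t (x, xh)))
        + ∑ x, r x * ∑ xh, Function.update q (x₀, xh₀) t (x, xh))
      (lam * pX x₀ *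
          (Real.log (q (x₀, xh₀) / ∑ x', pX x' * q (x', xh₀))
            + lam⁻¹ * dR (x₀, xh₀))
        - β * pX x₀ * (∑ y, pYX x₀ y *
            Real.log
              ((∑ x, q (x, xh₀) * (pX x * pYX x y / ∑ x', pX x' * pYX x' y)) /
               ∑ x, pX x * q (x, xh₀)))
        + r x₀)
      (q (x₀, xh₀)) := by
  classical
  set t₀ : ℝ := q (x₀, xh₀) with ht₀
  have hself : Function.update q (x₀, xh₀) t₀ = q := Function.update_eq_self _ _
  have hq0 : ∀ p : 𝒳 × 𝒳h, q p ≠ 0 := fun ⟨x, xh⟩ => (hqpos x xh).ne'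
  -- marginals at the point
  have hPQpos : ∀ xh, 0 < ∑ x', pX x' * q (x', xh) :=
    fun xh => Finset.sum_pos (fun x _ => mul_pos (hpXpos x) (hqpos x xh))
      Finset.univ_nonempty
  have hPQ0 : ∀ xh, (∑ x', pX x' * q (x', xh)) ≠ 0 := fun xh => (hPQpos xh).ne'
  have hpYpos : ∀ y, 0 < ∑ x', pX x' * pYX x' y :=
    fun y => Finset.sum_pos (fun x _ => mul_pos (hpXpos x) (hpYXpos x y))
      Finset.univ_nonempty
  have hSpos : ∀ xh y,
      0 < ∑ x, q (x, xh) * (pX x * pYX x y / ∑ x', pX x' * pYX x' y) :=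
    fun xh y => Finset.sum_pos (fun x _ => mul_pos (hqpos x xh)
      (div_pos (mul_pos (hpXpos x) (hpYXpos x y)) (hpYpos y))) Finset.univ_nonempty
  -- entry derivative
  have hE : ∀ p : 𝒳 × 𝒳h, HasDerivAt (fun t => Function.update q (x₀, xh₀) t p)
      (if p = (x₀, xh₀) then (1:ℝ) else 0) t₀ := by
    intro p
    simp only [Function.update_apply]
    split_ifs with h
    · simpa using hasDerivAt_id' t₀
    · exact hasDerivAt_const _ _
  have hEval : ∀ p : 𝒳 × 𝒳h, Function.update q (x₀, xh₀) t₀ p = q p := by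
    simp [hself]
  -- pq derivative
  have hPQ : ∀ xh, HasDerivAt
      (fun t => ∑ x', pX x' * Function.update q (x₀, xh₀) t (x', xh))
      (if xh = xh₀ then pX x₀ else 0) t₀ := by
    intro xh
    have h := HasDerivAt.fun_sum
      (fun x' (_ : x' ∈ Finset.univ) => (hE (x', xh)).const_mul (pX x'))
    refine h.congr_deriv (Eq.symm ?_)
    by_cases hxh : xh = xh₀ <;> simp [hxh, Prod.ext_iff]
  have hPQval : ∀ xh, (∑ x', pX x' * Function.update q (x₀, xh₀) t₀ (x', xh))
      = ∑ x', pX x' * q (x', xh) := by simp [hself]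
  -- pq(·|y) derivative
  have hS : ∀ (xh : 𝒳h) (y : 𝒴), HasDerivAt
      (fun t => ∑ x, Function.update q (x₀, xh₀) t (x, xh) *
        (pX x * pYX x y / ∑ x', pX x' * pYX x' y))
      (if xh = xh₀ then pX x₀ * pYX x₀ y / ∑ x', pX x' * pYX x' y else 0) t₀ := by
    intro xh y
    have h := HasDerivAt.fun_sum (fun x (_ : x ∈ Finset.univ) =>
      (hE (x, xh)).mul_const (pX x * pYX x y / ∑ x', pX x' * pYX x' y))
    refine h.congr_deriv (Eq.symm ?_)
    by_cases hxh : xh = xh₀ <;> simp [hxh, Prod.ext_iff]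
  have hSval : ∀ xh y, (∑ x, Function.update q (x₀, xh₀) t₀ (x, xh) *
      (pX x * pYX x y / ∑ x', pX x' * pYX x' y))
      = ∑ x, q (x, xh) * (pX x * pYX x y / ∑ x', pX x' * pYX x' y) := by
    simp [hself]
  -- Piece 1 : rate term
  have h1 : HasDerivAt
      (fun t => ∑ x, ∑ xh, pX x * Function.update q (x₀, xh₀) t (x, xh) *
          Real.log (Function.update q (x₀, xh₀) t (x, xh) /
            ∑ x', pX x' * Function.update q (x₀, xh₀) t (x', xh)))
      (pX x₀ * Real.log (q (x₀, xh₀) / ∑ x', pX x' * q (x', xh₀))) t₀ := by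
    have hsum : ∀ (x : 𝒳) (xh : 𝒳h), HasDerivAt
        (fun t => pX x * Function.update q (x₀, xh₀) t (x, xh) *
          Real.log (Function.update q (x₀, xh₀) t (x, xh) /
            ∑ x', pX x' * Function.update q (x₀, xh₀) t (x', xh)))
        ((if (x, xh) = (x₀, xh₀) then
            pX x₀ * Real.log (q (x₀, xh₀) / ∑ x', pX x' * q (x', xh₀)) + pX x₀
          else 0)
         - (if xh = xh₀ then pX x * q (x, xh) * pX x₀ / ∑ x', pX x' * q (x', xh₀)
          else 0)) t₀ := by
      intro x xh
      have h := log_div_deriv (hE (x, xh)) (hPQ xh) (hEval (x, xh)) (hPQval xh)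
        (hq0 (x, xh)) (hPQ0 xh) (pX x)
      refine h.congr_deriv (Eq.symm ?_)
      by_cases hxh : xh = xh₀
      · subst hxh
        by_cases hx : x = x₀
        · subst hx
          simp only [eq_self_iff_true, ↓reduceIte]
          field_simp [hq0 (x, xh), hPQ0 xh]
          ring
        · have hne : (x, xh) ≠ (x₀, xh) := by simp [hx]
          simp only [if_neg hne, eq_self_iff_true, ↓reduceIte]
          field_simp [hq0 (x, xh), hPQ0 xh]
          ring
      · simp [hxh]
    have h := HasDerivAt.fun_sum (fun x (_ : x ∈ Finset.univ) =>
      HasDerivAt.fun_sum (fun xh (_ : xh ∈ Finset.univ) => hsum x xh))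
    refine h.congr_deriv (Eq.symm ?_)
    rw [eq_comm]
    simp only [Finset.sum_sub_distrib]
    have hA : (∑ x, ∑ xh, (if (x, xh) = (x₀, xh₀) then
        pX x₀ * Real.log (q (x₀, xh₀) / ∑ x', pX x' * q (x', xh₀)) + pX x₀
        else 0)) = pX x₀ * Real.log (q (x₀, xh₀) / ∑ x', pX x' * q (x', xh₀)) + pX x₀ := by
      simp [Prod.ext_iff, ite_and, Finset.sum_ite_eq, Finset.sum_ite_eq']
    have hB : (∑ x, ∑ xh, (if xh = xh₀ then
        pX x * q (x, xh) * pX x₀ / ∑ x', pX x' * q (x', xh₀) else 0)) = pX x₀ := by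
      have : ∀ x : 𝒳, (∑ xh, (if xh = xh₀ then
          pX x * q (x, xh) * pX x₀ / ∑ x', pX x' * q (x', xh₀) else 0))
          = pX x * q (x, xh₀) * pX x₀ / ∑ x', pX x' * q (x', xh₀) := by
        intro x; simp [Finset.sum_ite_eq', Finset.sum_ite_eq]
      rw [Finset.sum_congr rfl fun x _ => this x]
      rw [← Finset.sum_div, ← Finset.sum_mul]
      rw [mul_comm, mul_div_assoc, div_self (hPQ0 xh₀), mul_one]
    rw [hA, hB]
    ring
  -- Piece 2 : distortion term
  have h2 : HasDerivAt
      (fun t => ∑ x, ∑ xh, pX x * Function.update q (x₀, xh₀) t (x, xh) * dR (x, xh))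
      (pX x₀ * dR (x₀, xh₀)) t₀ := by
    have h := HasDerivAt.fun_sum (fun x (_ : x ∈ Finset.univ) =>
      HasDerivAt.fun_sum (fun xh (_ : xh ∈ Finset.univ) =>
        ((hE (x, xh)).const_mul (pX x)).mul_const (dR (x, xh))))
    refine h.congr_deriv (Eq.symm ?_)
    simp [Prod.ext_iff, ite_and, mul_ite, ite_mul, Finset.sum_ite_eq, Finset.sum_ite_eq']
  -- Piece 3 : relevance term
  have h3 : HasDerivAt
      (fun t => ∑ xh, ∑ y, (∑ x, pX x * pYX x y) *
          (∑ x, Function.update q (x₀, xh₀) t (x, xh) *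
            (pX x * pYX x y / ∑ x', pX x' * pYX x' y)) *
          Real.log
            ((∑ x, Function.update q (x₀, xh₀) t (x, xh) *
              (pX x * pYX x y / ∑ x', pX x' * pYX x' y)) /
             ∑ x, pX x * Function.update q (x₀, xh₀) t (x, xh)))
      (pX x₀ * ∑ y, pYX x₀ y *
        Real.log
          ((∑ x, q (x, xh₀) * (pX x * pYX x y / ∑ x', pX x' * pYX x' y)) /
           ∑ x, pX x * q (x, xh₀))) t₀ := by
    have hsum : ∀ (xh : 𝒳h) (y : 𝒴), HasDerivAt
        (fun t => (∑ x, pX x * pYX x y) *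
          (∑ x, Function.update q (x₀, xh₀) t (x, xh) *
            (pX x * pYX x y / ∑ x', pX x' * pYX x' y)) *
          Real.log
            ((∑ x, Function.update q (x₀, xh₀) t (x, xh) *
              (pX x * pYX x y / ∑ x', pX x' * pYX x' y)) /
             ∑ x, pX x * Function.update q (x₀, xh₀) t (x, xh)))
        (if xh = xh₀ then
          pX x₀ * pYX x₀ y *
            Real.log
              ((∑ x, q (x, xh₀) * (pX x * pYX x y / ∑ x', pX x' * pYX x' y)) /
               ∑ x, pX x * q (x, xh₀))
          + pX x₀ * pYX x₀ y
          - (∑ x', pX x' * pYX x' y) *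
              (∑ x, q (x, xh₀) * (pX x * pYX x y / ∑ x', pX x' * pYX x' y)) *
              pX x₀ / ∑ x, pX x * q (x, xh₀)
         else 0) t₀ := by
      intro xh y
      have h := log_div_deriv (hS xh y) (hPQ xh) (hSval xh y) (hPQval xh)
        (hSpos xh y).ne' (hPQ0 xh) (∑ x, pX x * pYX x y)
      refine h.congr_deriv (Eq.symm ?_)
      by_cases hxh : xh = xh₀
      · subst hxh
        simp only [eq_self_iff_true, ↓reduceIte]
        set PY : ℝ := ∑ x', pX x' * pYX x' y with hPYdef
        set PQv : ℝ := ∑ x, pX x * q (x, xh) with hPQdef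
        set S : ℝ := ∑ x, q (x, xh) * (pX x * pYX x y / PY) with hSdef
        have hPY0 : PY ≠ 0 := (hpYpos y).ne'
        have hS0 : S ≠ 0 := (hSpos xh y).ne'
        have hPQv0 : PQv ≠ 0 := hPQ0 xh
        field_simp
        ring
      · simp [if_neg hxh]
    have h := HasDerivAt.fun_sum (fun xh (_ : xh ∈ Finset.univ) =>
      HasDerivAt.fun_sum (fun y (_ : y ∈ Finset.univ) => hsum xh y))
    refine h.congr_deriv (Eq.symm ?_)
    rw [eq_comm]
    simp only [Finset.sum_ite_irrel, Finset.sum_const_zero, Finset.sum_ite_eq',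
      Finset.mem_univ, if_true]
    rw [Finset.sum_sub_distrib, Finset.sum_add_distrib]
    have hT2 : (∑ y, pX x₀ * pYX x₀ y) = pX x₀ := by
      rw [← Finset.mul_sum, hpYXsum, mul_one]
    have hT3 : (∑ y, (∑ x', pX x' * pYX x' y) *
        (∑ x, q (x, xh₀) * (pX x * pYX x y / ∑ x', pX x' * pYX x' y)) *
        pX x₀ / ∑ x, pX x * q (x, xh₀)) = pX x₀ := by
      have key : (∑ y, (∑ x', pX x' * pYX x' y) *
          (∑ x, q (x, xh₀) * (pX x * pYX x y / ∑ x', pX x' * pYX x' y)))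
          = ∑ x, pX x * q (x, xh₀) := by
        have : ∀ y : 𝒴, (∑ x', pX x' * pYX x' y) *
            (∑ x, q (x, xh₀) * (pX x * pYX x y / ∑ x', pX x' * pYX x' y))
            = ∑ x, q (x, xh₀) * (pX x * pYX x y) := by
          intro y
          rw [Finset.mul_sum]
          refine Finset.sum_congr rfl fun x _ => ?_
          field_simp
          rw [mul_assoc, mul_assoc, mul_div_cancel_left₀ _ (hpYpos y).ne']; ring
        rw [Finset.sum_congr rfl fun y _ => this y, Finset.sum_comm]
        refine Finset.sum_congr rfl fun x _ => ?_
        rw [← Finset.mul_sum]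
        have h2 : (∑ y, pX x * pYX x y) = pX x := by
          rw [← Finset.mul_sum, hpYXsum, mul_one]
        rw [h2, mul_comm]
      rw [← Finset.sum_div, ← Finset.sum_mul, key,
        mul_comm, mul_div_assoc, div_self (hPQpos xh₀).ne', mul_one]
    rw [hT2, hT3, add_sub_cancel_right, Finset.mul_sum]
    exact Finset.sum_congr rfl fun y _ => by ring
  -- Piece 4 : multiplier term
  have h4 : HasDerivAt
      (fun t => ∑ x, r x * ∑ xh, Function.update q (x₀, xh₀) t (x, xh))
      (r x₀) t₀ := by
    have h := HasDerivAt.fun_sum (fun x (_ : x ∈ Finset.univ) =>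
      (HasDerivAt.fun_sum (fun xh (_ : xh ∈ Finset.univ) => hE (x, xh))).const_mul (r x))
    refine h.congr_deriv (Eq.symm ?_)
    simp [Prod.ext_iff, ite_and, Finset.sum_ite_eq, Finset.sum_ite_eq']
  -- Combine
  have h := (((h1.const_mul lam).add h2).sub (h3.const_mul β)).add h4
  refine h.congr_deriv (Eq.symm ?_)
  field_simp
  ring
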